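/- Let D ⊆ ℝⁿ be a nonempty bounded set, let f : ℝⁿ → ℝ^k be continuous, and let M₁,…,M_m : ℝ^k → ℝ be continuous functions. Define G := {(x, M₁(f(x)),…,M_m(f(x))) : x ∈ D} and graph(f|_D) := {(x, f(x)) : x ∈ D}. Let (H^ν)_{ν∈ℕ} be nonempty subsets of ℝ^{n+k}, all contained in a common bounded set, with graph(f|_D) ⊆ H^ν for every ν and d_H(H^ν, graph(f|_D)) → 0. Define R^ν := {(x, μ) ∈ ℝ^{n+m} : there exists t ∈ ℝ^k with (x,t) ∈ H^ν and μ_i = M_i(t) for all i ∈ {1,…,m}}. Then for every ν, G ⊆ conv(R^ν), and d_H(conv(R^ν), conv(G)) → 0 as ν → ∞. -/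

import Mathlib

open Filter

/-- Convergence of the polyhedral relaxations: if axis-aligned (or any) outer approximations
`H^ν` of the graph of the inner functions converge to that graph in Hausdorff distance, then
the induced relaxations `conv(R^ν)` of the multilinear-composition graph `G` contain `G` and
converge in Hausdorff distance to `conv(G)`. -/
theorem relaxation_convergence_for_multilinear_compositions
    (n k m : ℕ)
    (D : Set (EuclideanSpace ℝ (Fin n))) (hDne : D.Nonempty)
    (hDbd : Bornology.IsBounded D)
    (f : EuclideanSpace ℝ (Fin n) → EuclideanSpace ℝ (Fin k)) (hf : Continuous f)
    (M : Fin m → EuclideanSpace ℝ (Fin k) → ℝ) (hM : ∀ i, Continuous (M i))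
    (G : Set (EuclideanSpace ℝ (Fin n) × EuclideanSpace ℝ (Fin m)))
    (hG : G = (fun x => (x, (WithLp.toLp 2 (fun i => M i (f x)) : EuclideanSpace ℝ (Fin m)))) '' D)
    (graphF : Set (EuclideanSpace ℝ (Fin n) × EuclideanSpace ℝ (Fin k)))
    (hgraphF : graphF = (fun x => (x, f x)) '' D)
    (H : ℕ → Set (EuclideanSpace ℝ (Fin n) × EuclideanSpace ℝ (Fin k)))
    (hHne : ∀ ν, (H ν).Nonempty)
    (hHbd : ∃ B : Set (EuclideanSpace ℝ (Fin n) × EuclideanSpace ℝ (Fin k)),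
      Bornology.IsBounded B ∧ ∀ ν, H ν ⊆ B)
    (hHsup : ∀ ν, graphF ⊆ H ν)
    (hHconv : Tendsto (fun ν => Metric.hausdorffDist (H ν) graphF) atTop (nhds 0))
    (R : ℕ → Set (EuclideanSpace ℝ (Fin n) × EuclideanSpace ℝ (Fin m)))
    (hR : ∀ ν, R ν = {p | ∃ t : EuclideanSpace ℝ (Fin k),
      (p.1, t) ∈ H ν ∧ ∀ i, p.2 i = M i t}) :
    (∀ ν, G ⊆ convexHull ℝ (R ν)) ∧
      Tendsto (fun ν => Metric.hausdorffDist (convexHull ℝ (R ν)) (convexHull ℝ G))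
        atTop (nhds 0) := by
  -- the map Φ
  set Φ : (EuclideanSpace ℝ (Fin n) × EuclideanSpace ℝ (Fin k)) →
      (EuclideanSpace ℝ (Fin n) × EuclideanSpace ℝ (Fin m)) :=
    fun p => (p.1, (WithLp.toLp 2 (fun i => M i p.2) : EuclideanSpace ℝ (Fin m))) with hΦ
  have hΦc : Continuous Φ := by
    refine continuous_fst.prodMk ?_
    exact (PiLp.continuous_toLp 2 _).comp <| continuous_pi fun i => (hM i).comp continuous_snd
  have hRΦ : ∀ ν, R ν = Φ '' H ν := by
    intro ν
    rw [hR ν]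
    ext p
    constructor
    · rintro ⟨t, ht, hp⟩
      exact ⟨(p.1, t), ht, by simp [hΦ, Prod.ext_iff]; ext i; exact (hp i).symm⟩
    · rintro ⟨q, hq, rfl⟩
      exact ⟨q.2, hq, fun i => rfl⟩
  have hGΦ : G = Φ '' graphF := by
    rw [hG, hgraphF, Set.image_image]
  have hGR : ∀ ν, G ⊆ R ν := by
    intro ν
    rw [hGΦ, hRΦ ν]
    exact Set.image_mono (hHsup ν)
  refine ⟨fun ν => (hGR ν).trans (subset_convexHull ℝ _), ?_⟩
  obtain ⟨B, hBbd, hBsub⟩ := hHbd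
  have hFne : graphF.Nonempty := by
    rw [hgraphF]; exact hDne.image _
  have hFbd : Bornology.IsBounded graphF := ((hBbd.subset (hBsub 0)).subset (hHsup 0))
  have hK : IsCompact (closure B) := hBbd.isCompact_closure
  have hUC : UniformContinuousOn Φ (closure B) :=
    hK.uniformContinuousOn_of_continuous hΦc.continuousOn
  rw [Metric.tendsto_nhds]
  intro ε hε
  obtain ⟨δ, hδ, hδε⟩ := Metric.uniformContinuousOn_iff.mp hUC (ε / 2) (by linarith)
  have hev : ∀ᶠ ν in atTop, Metric.hausdorffDist (H ν) graphF < δ := by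
    have := Metric.tendsto_nhds.mp hHconv δ hδ
    filter_upwards [this] with ν hν
    have : |Metric.hausdorffDist (H ν) graphF| < δ := by simpa using hν
    exact lt_of_le_of_lt (le_abs_self _) this
  filter_upwards [hev] with ν hν
  -- Hausdorff edist finite
  have hfin : EMetric.hausdorffEdist (H ν) graphF ≠ ⊤ :=
    Metric.hausdorffEdist_ne_top_of_nonempty_of_bounded (hHne ν) hFne
      (hBbd.subset (hBsub ν)) hFbd
  -- every point of R ν is within ε/2 of conv G
  have hsub : R ν ⊆ Metric.thickening (ε / 2) (convexHull ℝ G) := by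
    rw [hRΦ ν]
    rintro _ ⟨p, hp, rfl⟩
    have h1 : Metric.infDist p graphF < δ :=
      lt_of_le_of_lt (Metric.infDist_le_hausdorffDist_of_mem hp hfin) hν
    obtain ⟨q, hq, hdq⟩ := (Metric.infDist_lt_iff hFne).mp h1
    have hpK : p ∈ closure B := subset_closure (hBsub ν hp)
    have hqK : q ∈ closure B := subset_closure (hBsub ν (hHsup ν hq))
    have hd : dist (Φ p) (Φ q) < ε / 2 := hδε p hpK q hqK hdq
    rw [Metric.mem_thickening_iff]
    have hqG : Φ q ∈ G := by rw [hGΦ]; exact ⟨q, hq, rfl⟩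
    exact ⟨Φ q, subset_convexHull ℝ G hqG, hd⟩
  have hconvsub : convexHull ℝ (R ν) ⊆ Metric.thickening (ε / 2) (convexHull ℝ G) :=
    convexHull_min hsub ((convex_convexHull ℝ G).thickening _)
  have hle : Metric.hausdorffDist (convexHull ℝ (R ν)) (convexHull ℝ G) ≤ ε / 2 := by
    apply Metric.hausdorffDist_le_of_mem_dist (by linarith)
    · intro x hx
      obtain ⟨y, hy, hd⟩ := Metric.mem_thickening_iff.mp (hconvsub hx)
      exact ⟨y, hy, hd.le⟩
    · intro y hy
      refine ⟨y, convexHull_mono (hGR ν) hy, ?_⟩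
      rw [dist_self]; positivity
  have hnn : 0 ≤ Metric.hausdorffDist (convexHull ℝ (R ν)) (convexHull ℝ G) :=
    Metric.hausdorffDist_nonneg
  rw [Real.dist_eq]
  rw [abs_of_nonneg (by simpa using hnn)]
  simpa using lt_of_le_of_lt hle (by linarith)
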